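/- Let $x \in \mathbb{R}^n$ and $\lambda > 0$ with $\|x\|_\infty > \lambda$. Define the soft-thresholding $z \in \mathbb{R}^n$ by $z_i = 0$ if $|x_i| \le \lambda$, $z_i = x_i - \lambda$ if $x_i > \lambda$, and $z_i = x_i + \lambda$ if $x_i < -\lambda$. Then $z \ne 0$ and $y_* = z/\|z\|_2$ is a global minimizer of $-\frac{1}{\lambda} y^T x + \|y\|_1$ over the unit sphere $\mathbb{S}^{n-1}$. -/
import Mathlib


/-- if `‖x‖_∞ > λ`, the soft-thresholding `z` is nonzero and `z/‖z‖₂` is a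
global minimizer of `-(1/λ)yᵀx + ‖y‖₁` over the unit sphere. -/
theorem stmt2 (n : ℕ) (x : Fin n → ℝ) (lam : ℝ) (hlam : 0 < lam)
    (hinf : ∃ i, lam < |x i|) :
    let z : Fin n → ℝ :=
      fun i => if |x i| ≤ lam then 0 else if lam < x i then x i - lam else x i + lam
    let ystar : Fin n → ℝ := fun i => z i / Real.sqrt (∑ j, (z j) ^ 2)
    z ≠ 0 ∧ (∑ i, (ystar i) ^ 2) = 1 ∧
      ∀ y : Fin n → ℝ, (∑ i, (y i) ^ 2) = 1 →
        -(1 / lam) * (∑ i, ystar i * x i) + ∑ i, |ystar i| ≤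
          -(1 / lam) * (∑ i, y i * x i) + ∑ i, |y i| := by
  intro z ystar
  obtain ⟨i0, hi0⟩ := hinf
  have hzdef : ∀ i, z i = if |x i| ≤ lam then 0
      else if lam < x i then x i - lam else x i + lam := fun i => rfl
  have key1 : ∀ i, z i * x i = z i ^ 2 + lam * |z i| := by
    intro i
    rw [hzdef i]
    split_ifs with h1 h2
    · simp
    · rw [abs_of_pos (by linarith)]; ring
    · push_neg at h1 h2
      rcases lt_abs.mp h1 with h | h
      · linarith
      · rw [abs_of_neg (by linarith)]; ring
  have key2 : ∀ i, |x i - z i| ≤ lam := by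
    intro i
    rw [hzdef i]
    split_ifs with h1 h2
    · simpa using h1
    · simp [abs_of_pos hlam, le_refl]
    · simp [abs_of_pos hlam, le_refl]
  have hz0 : z i0 ≠ 0 := by
    rw [hzdef i0]
    split_ifs with h1 h2
    · linarith
    · intro h; linarith
    · push_neg at h1 h2
      rcases lt_abs.mp h1 with h | h
      · linarith
      · intro hc; linarith
  have hS : 0 < ∑ j, (z j) ^ 2 := by
    refine Finset.sum_pos' (fun i _ => sq_nonneg _) ⟨i0, Finset.mem_univ _, ?_⟩
    exact lt_of_le_of_ne (sq_nonneg _) (Ne.symm (pow_ne_zero 2 hz0))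
  set s := Real.sqrt (∑ j, (z j) ^ 2) with hsdef
  have hs : 0 < s := Real.sqrt_pos.mpr hS
  have hs2 : s ^ 2 = ∑ j, (z j) ^ 2 := Real.sq_sqrt hS.le
  have hystar : ∀ i, ystar i = z i / s := fun i => rfl
  have hsum_sq : (∑ i, (ystar i) ^ 2) = 1 := by
    simp only [hystar, div_pow, ← Finset.sum_div]
    rw [← hs2]
    exact div_self (by positivity)
  refine ⟨fun h => hz0 (by rw [congrFun h i0]; rfl), hsum_sq, ?_⟩
  intro y hy
  -- value at ystar
  have hzx : (∑ i, z i * x i) = (∑ j, (z j) ^ 2) + lam * (∑ i, |z i|) := by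
    rw [Finset.mul_sum, ← Finset.sum_add_distrib]
    exact Finset.sum_congr rfl fun i _ => key1 i
  have hLHS : -(1 / lam) * (∑ i, ystar i * x i) + ∑ i, |ystar i| = -(s / lam) := by
    have e1 : (∑ i, ystar i * x i) = ((∑ j, (z j) ^ 2) + lam * (∑ i, |z i|)) / s := by
      simp only [hystar, div_mul_eq_mul_div, ← Finset.sum_div, hzx]
    have e2 : (∑ i, |ystar i|) = (∑ i, |z i|) / s := by
      simp only [hystar, abs_div, abs_of_pos hs, ← Finset.sum_div]
    rw [e1, e2, ← hs2]
    field_simp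
    ring
  -- lower bound for any y on the sphere
  have hbound : ∀ i, -(1 / lam) * (z i * y i) ≤ -(1 / lam) * (y i * x i) + |y i| := by
    intro i
    have h3 : (x i - z i) * y i ≤ lam * |y i| :=
      calc (x i - z i) * y i ≤ |(x i - z i) * y i| := le_abs_self _
        _ = |x i - z i| * |y i| := abs_mul _ _
        _ ≤ lam * |y i| := mul_le_mul_of_nonneg_right (key2 i) (abs_nonneg _)
    have h4 : (1 / lam) * ((x i - z i) * y i) ≤ (1 / lam) * (lam * |y i|) :=
      mul_le_mul_of_nonneg_left h3 (by positivity)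
    have h5 : (1 / lam) * (lam * |y i|) = |y i| := by field_simp
    nlinarith [h4, h5]
  have hsum_bound : -(1 / lam) * (∑ i, z i * y i) ≤
      -(1 / lam) * (∑ i, y i * x i) + ∑ i, |y i| := by
    rw [Finset.mul_sum, Finset.mul_sum, ← Finset.sum_add_distrib]
    exact Finset.sum_le_sum fun i _ => hbound i
  have hCS : (∑ i, z i * y i) ≤ s := by
    have h := Real.sum_mul_le_sqrt_mul_sqrt Finset.univ z y
    rwa [hy, Real.sqrt_one, mul_one, ← hsdef] at h
  have hfinal : -(s / lam) ≤ -(1 / lam) * (∑ i, z i * y i) := by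
    have := mul_le_mul_of_nonneg_left hCS (le_of_lt (by positivity : (0:ℝ) < 1 / lam))
    have h' : (1 / lam) * s = s / lam := by ring
    linarith
  rw [hLHS]
  linarith
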